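/- Let H = (V, E) be a hypergraph on vertex set V = {1, ..., n} (n ≥ 5) whose hyperedges are all sets of three cyclically consecutive vertices {i, i+1, i+2} (indices mod n). Then the edge intersection hypergraph EI(H), whose edges are all intersections e₁ ∩ e₂ of distinct hyperedges e₁, e₂ of H having at least 2 elements, equals the cycle Cₙ, i.e. its edge set is exactly {{i, i+1} : i ∈ V} (indices mod n). -/
import Mathlib


/-- Edge set of the edge intersection hypergraph of a (set-of-hyperedges) hypergraph
on vertex set `ZMod n`. -/
def EIset {n : ℕ} (E : Set (Finset (ZMod n))) : Set (Finset (ZMod n)) :=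
  { s | ∃ e₁ ∈ E, ∃ e₂ ∈ E, e₁ ≠ e₂ ∧ s = e₁ ∩ e₂ ∧ 2 ≤ s.card }

/-- Edge set of the edge intersection hypergraph, for a finite family of hyperedges. -/
def EIsetF {n : ℕ} (E : Finset (Finset (ZMod n))) : Set (Finset (ZMod n)) :=
  { s | ∃ e₁ ∈ E, ∃ e₂ ∈ E, e₁ ≠ e₂ ∧ s = e₁ ∩ e₂ ∧ 2 ≤ s.card }

/-- The edge set of the cycle `Cₙ` on vertex set `ZMod n`. -/
def cycleEdges (n : ℕ) : Set (Finset (ZMod n)) :=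
  { s | ∃ i : ZMod n, s = {i, i + 1} }

/-- The number of edges of `Cₙ` contained in the hyperedge `e`. -/
noncomputable def kval {n : ℕ} (e : Finset (ZMod n)) : ℕ :=
  Set.ncard { s : Finset (ZMod n) | s ∈ cycleEdges n ∧ s ⊆ e }

lemma castz_ne_zero {n : ℕ} (hn : 5 ≤ n) {k : ℤ} (h0 : k ≠ 0) (h5 : |k| < 5) :
    (k : ZMod n) ≠ 0 := by
  intro h
  rw [ZMod.intCast_zmod_eq_zero_iff_dvd] at h
  have := Int.eq_zero_of_abs_lt_dvd h (lt_of_lt_of_le h5 (by exact_mod_cast hn))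
  exact h0 this

lemma intc_inj {n : ℕ} (hn : 5 ≤ n) {a b : ℤ} (h : (a : ZMod n) = b) (hd : |a - b| < 5) :
    a = b := by
  by_contra hne
  exact castz_ne_zero hn (sub_ne_zero.mpr hne) hd (by push_cast; rw [h]; ring)

lemma mem_triple {n : ℕ} {i a : ZMod n} (h : a ∈ ({i, i + 1, i + 2} : Finset (ZMod n))) :
    ∃ x : ℤ, 0 ≤ x ∧ x ≤ 2 ∧ a = i + (x : ZMod n) := by
  simp only [Finset.mem_insert, Finset.mem_singleton] at h
  rcases h with h | h | h
  · exact ⟨0, by norm_num, by norm_num, by simpa using h⟩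
  · exact ⟨1, by norm_num, by norm_num, by push_cast; simpa using h⟩
  · exact ⟨2, by norm_num, by norm_num, by push_cast; simpa using h⟩

lemma inter_succ {n : ℕ} (hn : 5 ≤ n) (i : ZMod n) :
    ({i, i + 1, i + 2} : Finset (ZMod n)) ∩ {i + 1, i + 1 + 1, i + 1 + 2} = {i + 1, i + 2} := by
  ext z
  simp only [Finset.mem_inter]
  constructor
  · rintro ⟨hz1, hz2⟩
    obtain ⟨p, hp0, hp2, hzp⟩ := mem_triple hz1
    obtain ⟨q, hq0, hq2, hzq⟩ := mem_triple hz2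
    have hpq : ((p : ZMod n)) = ((q + 1 : ℤ) : ZMod n) := by
      push_cast
      have := hzp.symm.trans hzq
      linear_combination this
    have hpq' : p = q + 1 := intc_inj hn hpq (by rw [abs_lt]; omega)
    have : p = 1 ∨ p = 2 := by omega
    simp only [Finset.mem_insert, Finset.mem_singleton]
    rcases this with rfl | rfl
    · left; rw [hzp]; push_cast; ring
    · right; rw [hzp]; push_cast; ring
  · intro hz
    simp only [Finset.mem_insert, Finset.mem_singleton] at hz ⊢
    rcases hz with rfl | rfl
    · exact ⟨by tauto, by tauto⟩
    · refine ⟨by tauto, Or.inr (Or.inl (by ring))⟩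

lemma triple_ne {n : ℕ} (hn : 5 ≤ n) (i : ZMod n) :
    ({i, i + 1, i + 2} : Finset (ZMod n)) ≠ {i + 1, i + 1 + 1, i + 1 + 2} := by
  intro h
  have hi : i ∈ ({i + 1, i + 1 + 1, i + 1 + 2} : Finset (ZMod n)) := by
    rw [← h]; exact Finset.mem_insert_self _ _
  simp only [Finset.mem_insert, Finset.mem_singleton] at hi
  rcases hi with h' | h' | h'
  · exact castz_ne_zero hn (k := 1) one_ne_zero (by norm_num)
      (by push_cast; linear_combination -h')
  · exact castz_ne_zero hn (k := 2) two_ne_zero (by norm_num)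
      (by push_cast; linear_combination -h')
  · exact castz_ne_zero hn (k := 3) three_ne_zero (by norm_num)
      (by push_cast; linear_combination -h')

theorem stmt0 (n : ℕ) (hn : 5 ≤ n) (E : Set (Finset (ZMod n)))
    (hE : E = { e | ∃ i : ZMod n, e = {i, i + 1, i + 2} }) :
    EIset E = cycleEdges n := by
  subst hE
  ext s
  constructor
  · rintro ⟨e₁, ⟨i, rfl⟩, e₂, ⟨j, rfl⟩, hne, rfl, hcard⟩
    obtain ⟨a, ha, b, hb, hab⟩ := Finset.one_lt_card.mp hcard
    obtain ⟨ha1, ha2⟩ := Finset.mem_inter.mp ha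
    obtain ⟨hb1, hb2⟩ := Finset.mem_inter.mp hb
    obtain ⟨x, hx0, hx2, hax⟩ := mem_triple ha1
    obtain ⟨x', hx'0, hx'2, hax'⟩ := mem_triple ha2
    obtain ⟨y, hy0, hy2, hby⟩ := mem_triple hb1
    obtain ⟨y', hy'0, hy'2, hby'⟩ := mem_triple hb2
    have h1 : ((x - x' : ℤ) : ZMod n) = j - i := by
      push_cast; linear_combination hax.symm.trans hax'
    have h2 : ((y - y' : ℤ) : ZMod n) = j - i := by
      push_cast; linear_combination hby.symm.trans hby'
    have hxy : x - x' = y - y' := intc_inj hn (h1.trans h2.symm) (by rw [abs_lt]; omega)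
    have hxne : x ≠ y := by intro h; apply hab; rw [hax, hby, h]
    have hx'ne : x' ≠ y' := by intro h; apply hab; rw [hax', hby', h]
    have hd0 : x - x' ≠ 0 := by
      intro h
      apply hne
      have hji : j = i := by
        rw [h] at h1; push_cast at h1; linear_combination -h1
      rw [hji]
    have hd : x - x' = 1 ∨ x - x' = -1 := by omega
    rcases hd with hd | hd
    · have hj : j = i + 1 := by
        rw [hd] at h1; push_cast at h1; linear_combination -h1
      subst hj
      refine ⟨i + 1, ?_⟩
      rw [inter_succ hn i]
      have : i + 2 = i + 1 + 1 := by ring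
      rw [this]
    · have hi : i = j + 1 := by
        rw [hd] at h1; push_cast at h1; linear_combination h1
      subst hi
      rw [Finset.inter_comm, inter_succ hn j]
      refine ⟨j + 1, ?_⟩
      have : j + 2 = j + 1 + 1 := by ring
      rw [this]
  · rintro ⟨k, rfl⟩
    have hk1 : k - 1 + 1 = k := by ring
    have hk2 : k - 1 + 2 = k + 1 := by ring
    refine ⟨{k - 1, k - 1 + 1, k - 1 + 2}, ⟨k - 1, rfl⟩,
      {k - 1 + 1, k - 1 + 1 + 1, k - 1 + 1 + 2}, ⟨k - 1 + 1, rfl⟩,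
      triple_ne hn (k - 1), ?_, ?_⟩
    · rw [inter_succ hn (k - 1), hk1, hk2]
    · rw [Finset.card_pair]
      intro h
      exact castz_ne_zero hn (k := 1) one_ne_zero (by norm_num)
        (by push_cast; linear_combination -h)
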